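/- Let G be a distribution function with right endpoint G_* = sup{x : G(x) < 1}. There exist γ ∈ (0,1) and a sequence (v_n) of reals such that G(v_n)^n → γ if and only if G is regular, i.e. G(G_*−) = 1 and lim_{x→G_*−} (1 − G(x−))/(1 − G(x)) = 1. -/

import Mathlib

open Filter Topology Classical

/-- A distribution function: nondecreasing, right-continuous, limits 0 and 1. -/
def IsDistFun (G : ℝ → ℝ) : Prop :=
  Monotone G ∧ (∀ x, ContinuousWithinAt G (Set.Ici x) x) ∧
    Tendsto G atBot (𝓝 0) ∧ Tendsto G atTop (𝓝 1)

/-- The filter of approach to the right endpoint `G_* = sup {x : G x < 1}` from the left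
(`atTop` if the endpoint is `+∞`). -/
noncomputable def endFilter (G : ℝ → ℝ) : Filter ℝ :=
  if BddAbove {x | G x < 1} then 𝓝[<] (sSup {x | G x < 1}) else atTop

/-- Regularity in the sense of O'Brien: `G(G_*−) = 1` and `(1−G(x−))/(1−G(x)) → 1`
as `x → G_*−`. -/
def RegularDF (G : ℝ → ℝ) : Prop :=
  Tendsto G (endFilter G) (𝓝 1) ∧
  Tendsto (fun x => (1 - Function.leftLim G x) / (1 - G x)) (endFilter G) (𝓝 1)

/-- Strict tail-equivalence: same right endpoint and `(1−H(x))/(1−G(x)) → 1` at the endpoint. -/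
def StrictTailEquiv (G H : ℝ → ℝ) : Prop :=
  (BddAbove {x | G x < 1} ↔ BddAbove {x | H x < 1}) ∧
  sSup {x | G x < 1} = sSup {x | H x < 1} ∧
  Tendsto (fun x => (1 - H x) / (1 - G x)) (endFilter G) (𝓝 1)

section Helpers

variable {G : ℝ → ℝ}

/-- slope of `log (1 - t)` at `0`. -/
lemma log_slope : Tendsto (fun t : ℝ => Real.log (1 - t) / t) (𝓝[≠] (0:ℝ)) (𝓝 (-1)) := by
  have h1 : HasDerivAt (fun t : ℝ => 1 - t) (-1) 0 := by
    simpa using (hasDerivAt_id (0:ℝ)).const_sub 1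
  have h2 : HasDerivAt Real.log (1 : ℝ) ((1:ℝ) - 0) := by
    simpa using Real.hasDerivAt_log (by norm_num : (1:ℝ) - 0 ≠ 0)
  have h : HasDerivAt (fun t : ℝ => Real.log (1 - t)) (-1) 0 := by
    have := h2.comp 0 h1; rw [one_mul] at this; exact this
  have := hasDerivAt_iff_tendsto_slope.mp h
  apply this.congr'
  filter_upwards [self_mem_nhdsWithin] with t _
  simp [slope_def_field]

lemma seq_log_ratio {t : ℕ → ℝ} (h0 : Tendsto t atTop (𝓝 0))
    (hne : ∀ᶠ n in atTop, t n ≠ 0) :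
    Tendsto (fun n => Real.log (1 - t n) / t n) atTop (𝓝 (-1)) :=
  log_slope.comp (tendsto_nhdsWithin_of_tendsto_nhds_of_eventually_within _ h0 hne)

lemma sub_tendsto_zero {w : ℕ → ℝ} {c : ℝ}
    (h : Tendsto (fun n : ℕ => (n:ℝ) * (1 - w n)) atTop (𝓝 c)) :
    Tendsto (fun n => 1 - w n) atTop (𝓝 0) := by
  have := h.mul (tendsto_inv_atTop_nhds_zero_nat (𝕜 := ℝ))
  rw [mul_zero] at this
  apply this.congr'
  filter_upwards [eventually_ge_atTop 1] with n hn
  have : (n:ℝ) ≠ 0 := by positivity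
  field_simp

/-- If `n (1 - wₙ) → c` and `wₙ ∈ (0,1)` eventually, then `wₙ ^ n → exp (-c)`. -/
lemma pow_tendsto_of_lin {w : ℕ → ℝ} {c : ℝ}
    (hw : ∀ᶠ n in atTop, 0 < w n ∧ w n < 1)
    (h : Tendsto (fun n : ℕ => (n:ℝ) * (1 - w n)) atTop (𝓝 c)) :
    Tendsto (fun n => w n ^ n) atTop (𝓝 (Real.exp (-c))) := by
  have ht0 : Tendsto (fun n => 1 - w n) atTop (𝓝 0) := sub_tendsto_zero h
  have hne : ∀ᶠ n in atTop, 1 - w n ≠ 0 := by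
    filter_upwards [hw] with n hn; exact sub_ne_zero.mpr (ne_of_gt hn.2)
  have hlr := seq_log_ratio ht0 hne
  have hlog : Tendsto (fun n : ℕ => (n:ℝ) * Real.log (w n)) atTop (𝓝 (-c)) := by
    have := h.mul hlr
    have e : c * (-1) = -c := by ring
    rw [e] at this
    apply this.congr'
    filter_upwards [hne] with n hn
    have : Real.log (1 - (1 - w n)) = Real.log (w n) := by ring_nf
    field_simp
    rw [← this]
  have : Tendsto (fun n : ℕ => Real.exp ((n:ℝ) * Real.log (w n))) atTop (𝓝 (Real.exp (-c))) :=
    (Real.continuous_exp.tendsto _).comp hlog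
  apply this.congr'
  filter_upwards [hw] with n hn
  rw [← Real.log_pow, Real.exp_log (pow_pos hn.1 n)]

/-- Converse: if `wₙ ∈ [0,1]` and `wₙ ^ n → γ ∈ (0,1)` then `wₙ → 1`, eventually `wₙ < 1`,
and `n (1 - wₙ) → - log γ`. -/
lemma lin_tendsto_of_pow {w : ℕ → ℝ} {γ : ℝ} (hγ : γ ∈ Set.Ioo (0:ℝ) 1)
    (hw01 : ∀ n, 0 ≤ w n ∧ w n ≤ 1)
    (h : Tendsto (fun n => w n ^ n) atTop (𝓝 γ)) :
    (∀ᶠ n in atTop, w n < 1) ∧ Tendsto w atTop (𝓝 1) ∧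
      Tendsto (fun n : ℕ => (n:ℝ) * (1 - w n)) atTop (𝓝 (-Real.log γ)) := by
  obtain ⟨hγ0, hγ1⟩ := hγ
  have hlt1 : ∀ᶠ n in atTop, w n < 1 := by
    have hhalf : γ < (1+γ)/2 := by linarith
    have h2 : (1+γ)/2 < 1 := by linarith
    filter_upwards [h.eventually_lt_const hhalf] with n hn
    by_contra hc
    push_neg at hc
    have : w n = 1 := le_antisymm (hw01 n).2 hc
    rw [this, one_pow] at hn; linarith
  have hw1 : Tendsto w atTop (𝓝 1) := by
    rw [tendsto_order]
    constructor
    · intro a ha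
      by_contra hc
      rw [not_eventually] at hc
      set b := max a 0 with hb
      have hb1 : b < 1 := by
        rcases max_cases a 0 with ⟨h1, _⟩ | ⟨h1, _⟩ <;> rw [hb, h1] <;> linarith
      have hb0 : 0 ≤ b := le_max_right _ _
      have hfreq : ∃ᶠ n in atTop, w n ≤ b := by
        apply hc.mono; intro n hn
        push_neg at hn
        exact le_max_of_le_left hn
      have hbpow : Tendsto (fun n => b ^ n) atTop (𝓝 0) :=
        tendsto_pow_atTop_nhds_zero_of_lt_one hb0 hb1
      have hev1 : ∀ᶠ n in atTop, γ/2 < w n ^ n := h.eventually_const_lt (by linarith)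
      have hev2 : ∀ᶠ n in atTop, b ^ n < γ/2 := hbpow.eventually_lt_const (by linarith)
      obtain ⟨n, hn1, hn2, hn3⟩ := (hfreq.and_eventually (hev1.and hev2)).exists
      have : w n ^ n ≤ b ^ n := pow_le_pow_left₀ (hw01 n).1 hn1 n
      linarith [hn2, hn3]
    · intro b hb
      exact Eventually.of_forall fun n => lt_of_le_of_lt (hw01 n).2 hb
  have hpos : ∀ᶠ n in atTop, 0 < w n := hw1.eventually_const_lt (by norm_num)
  have hlog : Tendsto (fun n : ℕ => (n:ℝ) * Real.log (w n)) atTop (𝓝 (Real.log γ)) := by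
    have := ((Real.continuousAt_log (ne_of_gt hγ0)).tendsto).comp h
    apply this.congr
    intro n
    simp [Function.comp, Real.log_pow]
  -- t n = 1 - w n → 0, nonzero eventually
  have ht0 : Tendsto (fun n => 1 - w n) atTop (𝓝 0) := by
    have := (tendsto_const_nhds (x := (1:ℝ))).sub hw1
    simpa using this
  have hne : ∀ᶠ n in atTop, 1 - w n ≠ 0 := by
    filter_upwards [hlt1] with n hn; exact sub_ne_zero.mpr (ne_of_gt hn)
  have hlr := seq_log_ratio ht0 hne
  have hinv : Tendsto (fun n => (1 - w n) / Real.log (1 - (1 - w n))) atTop (𝓝 (-1)) := by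
    have := hlr.inv₀ (by norm_num : (-1:ℝ) ≠ 0)
    rw [(by norm_num : (-1:ℝ)⁻¹ = -1)] at this
    apply this.congr
    intro n
    rw [inv_div]
  refine ⟨hlt1, hw1, ?_⟩
  have := hlog.mul hinv
  have e : Real.log γ * (-1) = -Real.log γ := by ring
  rw [e] at this
  apply this.congr'
  filter_upwards [hlt1, hpos] with n h1 h2
  have hwne : Real.log (w n) ≠ 0 := ne_of_lt (Real.log_neg h2 h1)
  have e2 : 1 - (1 - w n) = w n := by ring
  rw [e2]
  field_simp

lemma distFun_le_one (hG : IsDistFun G) (x : ℝ) : G x ≤ 1 := hG.1.ge_of_tendsto hG.2.2.2 x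

lemma distFun_nonneg (hG : IsDistFun G) (x : ℝ) : 0 ≤ G x := hG.1.le_of_tendsto hG.2.2.1 x

lemma lt_one_nonempty (hG : IsDistFun G) : {x | G x < 1}.Nonempty := by
  have := hG.2.2.1.eventually_lt_const (by norm_num : (0:ℝ) < 1)
  exact this.exists

lemma lt_one_of_lt_sSup (hG : IsDistFun G) {x : ℝ}
    (hx : x < sSup {x | G x < 1}) : G x < 1 := by
  obtain ⟨y, hy, hxy⟩ := exists_lt_of_lt_csSup (lt_one_nonempty hG) hx
  exact lt_of_le_of_lt (hG.1 hxy.le) hy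

lemma lt_one_of_unbdd (hG : IsDistFun G) (hB : ¬ BddAbove {x | G x < 1}) (x : ℝ) :
    G x < 1 := by
  rw [not_bddAbove_iff] at hB
  obtain ⟨y, hy, hxy⟩ := hB x
  exact lt_of_le_of_lt (hG.1 hxy.le) hy

lemma eventually_lt_one (hG : IsDistFun G) : ∀ᶠ x in endFilter G, G x < 1 := by
  rw [endFilter]; split_ifs with hB
  · filter_upwards [self_mem_nhdsWithin] with x hx
    exact lt_one_of_lt_sSup hG hx
  · exact Eventually.of_forall (lt_one_of_unbdd hG hB)

instance endFilter_neBot (G : ℝ → ℝ) : (endFilter G).NeBot := by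
  rw [endFilter]; split_ifs <;> infer_instance

lemma endFilter_countablyGenerated (G : ℝ → ℝ) : (endFilter G).IsCountablyGenerated := by
  rw [endFilter]; split_ifs <;> infer_instance

/-- Claim 1: a sequence with `G uₙ < 1` and `G uₙ → 1` forces `G → 1` at the endpoint. -/
lemma tendsto_one_endFilter (hG : IsDistFun G) {u : ℕ → ℝ}
    (hu1 : ∀ᶠ n in atTop, G (u n) < 1)
    (hu : Tendsto (fun n => G (u n)) atTop (𝓝 1)) :
    Tendsto G (endFilter G) (𝓝 1) := by
  rw [endFilter]; split_ifs with hB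
  · set s := sSup {x | G x < 1} with hs
    have hmono := hG.1
    have hlim : Tendsto G (𝓝[<] s) (𝓝 (Function.leftLim G s)) := hmono.tendsto_leftLim s
    suffices h : Function.leftLim G s = 1 by rwa [h] at hlim
    by_contra hne
    have hle : Function.leftLim G s ≤ 1 :=
      le_trans (hmono.leftLim_le le_rfl) (distFun_le_one hG s)
    have hlt : Function.leftLim G s < 1 := lt_of_le_of_ne hle hne
    have key : ∀ c : ℝ, c < 1 → Function.leftLim G s ≤ c → ∃ n, u n = s ∧ c < G (u n) := by
      intro c hc1 hcl
      obtain ⟨n, hn1, hn2⟩ := ((hu.eventually_const_lt hc1).and hu1).exists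
      have hns : u n ≤ s := le_csSup hB hn2
      rcases lt_or_eq_of_le hns with hlt' | heq
      · exact absurd (le_trans (hmono.le_leftLim hlt') hcl) (not_le.mpr hn1)
      · exact ⟨n, heq, hn1⟩
    obtain ⟨n₁, he1, hg1⟩ := key _ hlt le_rfl
    have hGs : G s < 1 := by
      have := hu1
      obtain ⟨n, hn1, hn2⟩ := ((hu.eventually_const_lt hlt).and hu1).exists
      have hns : u n ≤ s := le_csSup hB hn2
      rcases lt_or_eq_of_le hns with hlt' | heq
      · exact absurd (le_trans (hmono.le_leftLim hlt') le_rfl) (not_le.mpr hn1)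
      · rw [← heq]; exact hn2
    obtain ⟨n₂, he2, hg2⟩ := key (max (Function.leftLim G s) (G s))
      (max_lt hlt hGs) (le_max_left _ _)
    rw [he2] at hg2
    exact absurd (le_max_right (Function.leftLim G s) (G s)) (not_le.mpr hg2)
  · exact hG.2.2.2

/-- Claim 2 (O'Brien's key step): the left-limit ratio tends to `1` at the endpoint. -/
lemma ratio_tendsto (hG : IsDistFun G) {u : ℕ → ℝ} {τ : ℝ} (hτ : 0 < τ)
    (hu1 : ∀ᶠ n in atTop, G (u n) < 1)
    (hlin : Tendsto (fun n : ℕ => (n:ℝ) * (1 - G (u n))) atTop (𝓝 τ))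
    (hend : Tendsto G (endFilter G) (𝓝 1)) :
    Tendsto (fun x => (1 - Function.leftLim G x) / (1 - G x)) (endFilter G) (𝓝 1) := by
  haveI := endFilter_countablyGenerated G
  rw [tendsto_iff_seq_tendsto]
  intro x hx
  set s : ℕ → ℝ := fun n => 1 - G (u n) with hsdef
  have hs0 : Tendsto s atTop (𝓝 0) := sub_tendsto_zero hlin
  obtain ⟨n₀, hn₀⟩ := eventually_atTop.mp hu1
  have hspos : ∀ n, n₀ ≤ n → 0 < s n := fun n hn => by
    simp only [hsdef]; linarith [hn₀ n hn]
  set q : ℕ → ℝ := fun k => 1 - G (x k) with hqdef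
  set p : ℕ → ℝ := fun k => 1 - Function.leftLim G (x k) with hpdef
  have hqpos : ∀ᶠ k in atTop, 0 < q k := by
    have := hx.eventually (eventually_lt_one hG)
    filter_upwards [this] with k hk
    simp only [hqdef]; linarith
  have hq0 : Tendsto q atTop (𝓝 0) := by
    have := (tendsto_const_nhds (x := (1:ℝ))).sub (hend.comp hx)
    simpa using this
  set S : ℕ → Set ℕ := fun k => {n | n₀ ≤ n ∧ q k < s n} with hSdef
  have hbdd : ∀ k, 0 < q k → BddAbove (S k) := by
    intro k hk
    obtain ⟨M, hM⟩ := eventually_atTop.mp (hs0.eventually_lt_const hk)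
    refine ⟨M, fun n hn => ?_⟩
    by_contra hc
    push_neg at hc
    exact absurd hn.2 (not_lt.mpr (hM n hc.le).le)
  have hmem_ev : ∀ m : ℕ, ∀ᶠ k in atTop, max n₀ m ∈ S k := by
    intro m
    have hsp : 0 < s (max n₀ m) := hspos _ (le_max_left _ _)
    filter_upwards [hq0.eventually_lt_const hsp] with k hk
    exact ⟨le_max_left _ _, hk⟩
  set N : ℕ → ℕ := fun k => sSup (S k) with hNdef
  have hNtop : Tendsto N atTop atTop := by
    rw [tendsto_atTop]
    intro m
    filter_upwards [hmem_ev m, hqpos] with k hk hq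
    exact le_trans (le_max_right n₀ m) (le_csSup (hbdd k hq) hk)
  have hmain : ∀ᶠ k in atTop, 1 ≤ p k / q k ∧ p k / q k ≤ s (N k) / s (N k + 1) := by
    filter_upwards [hmem_ev n₀, hqpos] with k hk hq
    have hne : (S k).Nonempty := ⟨_, hk⟩
    have hNmem : N k ∈ S k := Nat.sSup_mem hne (hbdd k hq)
    have hN0 : n₀ ≤ N k := hNmem.1
    have hqN : q k < s (N k) := hNmem.2
    have hsucc : s (N k + 1) ≤ q k := by
      by_contra hc
      push_neg at hc
      have h2 : N k + 1 ≤ N k := le_csSup (hbdd k hq) ⟨le_trans hN0 (Nat.le_succ _), hc⟩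
      omega
    have hsuccpos : 0 < s (N k + 1) := hspos _ (le_trans hN0 (Nat.le_succ _))
    have hqp : q k ≤ p k := by
      simp only [hqdef, hpdef]
      have := hG.1.leftLim_le (le_refl (x k))
      linarith
    have hpN : p k ≤ s (N k) := by
      have hGu : G (u (N k)) < G (x k) := by
        simp only [hsdef, hqdef] at hqN; linarith
      have hux : u (N k) < x k := by
        by_contra hc
        push_neg at hc
        exact absurd (hG.1 hc) (not_le.mpr hGu)
      have := hG.1.le_leftLim hux
      simp only [hpdef, hsdef]; linarith
    constructor
    · rw [le_div_iff₀ hq]; linarith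
    · exact div_le_div₀ (by linarith : (0:ℝ) ≤ s (N k)) hpN hsuccpos hsucc
  have hN1 : Tendsto (fun k => N k + 1) atTop atTop :=
    tendsto_atTop_mono (fun k => Nat.le_succ _) hNtop
  have hA : Tendsto (fun k => (N k : ℝ) * s (N k)) atTop (𝓝 τ) := hlin.comp hNtop
  have hB : Tendsto (fun k => ((N k + 1 : ℕ) : ℝ) * s (N k + 1)) atTop (𝓝 τ) := hlin.comp hN1
  have hB' : Tendsto (fun k => ((N k : ℝ) + 1) * s (N k + 1)) atTop (𝓝 τ) := by
    apply hB.congr; intro k; push_cast; ring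
  have hC : Tendsto (fun k => ((N k : ℝ) + 1) / (N k : ℝ)) atTop (𝓝 1) := by
    have h0 : Tendsto (fun k => ((N k : ℝ))⁻¹) atTop (𝓝 0) :=
      (tendsto_inv_atTop_nhds_zero_nat (𝕜 := ℝ)).comp hNtop
    have h1 := (tendsto_const_nhds (x := (1:ℝ))).add h0
    rw [add_zero] at h1
    apply h1.congr'
    filter_upwards [hNtop.eventually (eventually_ge_atTop 1)] with k hk
    have hne : (N k : ℝ) ≠ 0 := by
      have : (0:ℕ) < N k := hk
      positivity
    field_simp
  have hupper : Tendsto (fun k => s (N k) / s (N k + 1)) atTop (𝓝 1) := by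
    have h2 := (hA.div hB' hτ.ne').mul hC
    rw [div_self hτ.ne', one_mul] at h2
    apply h2.congr'
    filter_upwards [hNtop.eventually (eventually_ge_atTop (max n₀ 1))] with k hk
    have h1 : (1:ℕ) ≤ N k := le_trans (le_max_right _ _) hk
    have hne : (N k : ℝ) ≠ 0 := by
      have : (0:ℕ) < N k := h1
      positivity
    have hp1 : 0 < s (N k) := hspos _ (le_trans (le_max_left _ _) hk)
    have hp2 : 0 < s (N k + 1) := hspos _ (le_trans (le_trans (le_max_left _ _) hk) (Nat.le_succ _))
    rw [Pi.div_apply]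
    field_simp
  exact tendsto_of_tendsto_of_tendsto_of_le_of_le' tendsto_const_nhds hupper
    (hmain.mono fun k h => h.1) (hmain.mono fun k h => h.2)

/-- Final analytic step of the backward direction. -/
lemma final_step (hG : IsDistFun G) (hreg : RegularDF G) {v : ℕ → ℝ}
    (hv_end : Tendsto v atTop (endFilter G))
    (hvG : ∀ᶠ n in atTop, G (v n) < 1)
    (ha : ∀ᶠ n : ℕ in atTop, 1 - 1/(n:ℝ) ≤ G (v n))
    (hb : ∀ᶠ n in atTop, Function.leftLim G (v n) ≤ 1 - 1/(n:ℝ)) :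
    ∃ γ : ℝ, γ ∈ Set.Ioo (0:ℝ) 1 ∧ ∃ w : ℕ → ℝ,
      Tendsto (fun n : ℕ => G (w n) ^ n) atTop (𝓝 γ) := by
  refine ⟨Real.exp (-1), ⟨Real.exp_pos _, Real.exp_lt_one_iff.mpr (by norm_num)⟩, v, ?_⟩
  set d : ℕ → ℝ := fun n => (n:ℝ) * (1 - G (v n)) with hddef
  have hr : Tendsto (fun n => (1 - Function.leftLim G (v n)) / (1 - G (v n)))
      atTop (𝓝 1) := hreg.2.comp hv_end
  have hupper : ∀ᶠ n in atTop, d n ≤ 1 := by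
    filter_upwards [ha, eventually_ge_atTop 1] with n hn h1
    have hn0 : (0:ℝ) < (n:ℝ) := by exact_mod_cast h1
    have : (n:ℝ) * (1 - G (v n)) ≤ (n:ℝ) * (1/(n:ℝ)) := by
      apply mul_le_mul_of_nonneg_left (by linarith) hn0.le
    calc d n ≤ (n:ℝ) * (1/(n:ℝ)) := this
      _ = 1 := by field_simp
  have hrpos : ∀ᶠ n in atTop,
      0 < (1 - Function.leftLim G (v n)) / (1 - G (v n)) :=
    hr.eventually_const_lt (by norm_num)
  have hlower : ∀ᶠ n in atTop,
      ((1 - Function.leftLim G (v n)) / (1 - G (v n)))⁻¹ ≤ d n := by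
    filter_upwards [hb, hvG, hrpos, eventually_ge_atTop 1] with n hn hv hrp h1
    have hn0 : (0:ℝ) < (n:ℝ) := by exact_mod_cast h1
    have hvne : (1:ℝ) - G (v n) ≠ 0 := by linarith
    have key : 1 ≤ d n * ((1 - Function.leftLim G (v n)) / (1 - G (v n))) := by
      have e : d n * ((1 - Function.leftLim G (v n)) / (1 - G (v n)))
          = (n:ℝ) * (1 - Function.leftLim G (v n)) := by
        field_simp [hddef]; ring
      rw [e]
      have h2 : 1/(n:ℝ) ≤ 1 - Function.leftLim G (v n) := by linarith
      calc (1:ℝ) = (n:ℝ) * (1/(n:ℝ)) := by field_simp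
        _ ≤ (n:ℝ) * (1 - Function.leftLim G (v n)) :=
            mul_le_mul_of_nonneg_left h2 hn0.le
    rw [inv_eq_one_div, div_le_iff₀ hrp]
    linarith
  have hinv : Tendsto (fun n =>
      ((1 - Function.leftLim G (v n)) / (1 - G (v n)))⁻¹) atTop (𝓝 1) := by
    have := hr.inv₀ one_ne_zero
    rwa [inv_one] at this
  have hd : Tendsto d atTop (𝓝 1) :=
    tendsto_of_tendsto_of_tendsto_of_le_of_le' hinv tendsto_const_nhds hlower hupper
  have hw : ∀ᶠ n in atTop, 0 < G (v n) ∧ G (v n) < 1 := by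
    filter_upwards [ha, hvG, eventually_ge_atTop 2] with n hn hv h2
    refine ⟨?_, hv⟩
    have h2' : (2:ℝ) ≤ (n:ℝ) := by exact_mod_cast h2
    have : 1/(n:ℝ) ≤ 1/2 := one_div_le_one_div_of_le (by norm_num) h2'
    linarith
  exact pow_tendsto_of_lin hw hd

lemma backward_exists (hG : IsDistFun G) (hreg : RegularDF G) :
    ∃ γ : ℝ, γ ∈ Set.Ioo (0:ℝ) 1 ∧ ∃ w : ℕ → ℝ,
      Tendsto (fun n : ℕ => G (w n) ^ n) atTop (𝓝 γ) := by
  classical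
  set S : ℕ → Set ℝ := fun n => {x | 1 - 1/(n:ℝ) ≤ G x} with hSdef
  set v : ℕ → ℝ := fun n => sInf (S n) with hvdef
  have h1n : ∀ n : ℕ, 1 ≤ n → 1 - 1/(n:ℝ) < 1 := by
    intro n hn
    have hn0 : (0:ℝ) < (n:ℝ) := by exact_mod_cast hn
    have : 0 < 1/(n:ℝ) := by positivity
    linarith
  have hSne : ∀ n : ℕ, 1 ≤ n → ∃ y, 1 - 1/(n:ℝ) < G y := fun n hn =>
    (hG.2.2.2.eventually_const_lt (h1n n hn)).exists
  have hSbdd : ∀ n : ℕ, 2 ≤ n → BddBelow (S n) := by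
    intro n hn
    have h2' : (2:ℝ) ≤ (n:ℝ) := by exact_mod_cast hn
    have hpos : 0 < 1 - 1/(n:ℝ) := by
      have : 1/(n:ℝ) ≤ 1/2 := one_div_le_one_div_of_le (by norm_num) h2'
      linarith
    obtain ⟨b, hb⟩ := (hG.2.2.1.eventually_lt_const hpos).exists
    refine ⟨b, fun x hx => ?_⟩
    by_contra hc
    push_neg at hc
    have h1 := hG.1 hc.le
    have hx' : 1 - 1/(n:ℝ) ≤ G x := hx
    linarith
  have hGv : ∀ n : ℕ, 2 ≤ n → 1 - 1/(n:ℝ) ≤ G (v n) := by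
    intro n hn
    obtain ⟨y, hy⟩ := hSne n (by omega)
    have hne : (S n).Nonempty := ⟨y, hy.le⟩
    have hrt : Tendsto G (𝓝[>] (v n)) (𝓝 (G (v n))) :=
      (hG.2.1 (v n)).mono_left (nhdsWithin_mono _ Set.Ioi_subset_Ici_self)
    refine ge_of_tendsto hrt ?_
    filter_upwards [self_mem_nhdsWithin] with y' hy'
    obtain ⟨z, hz, hzy⟩ := exists_lt_of_csInf_lt hne hy'
    have hz' : 1 - 1/(n:ℝ) ≤ G z := hz
    exact le_trans hz' (hG.1 hzy.le)
  have hleft : ∀ n : ℕ, 2 ≤ n → Function.leftLim G (v n) ≤ 1 - 1/(n:ℝ) := by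
    intro n hn
    refine le_of_tendsto (hG.1.tendsto_leftLim (v n)) ?_
    filter_upwards [self_mem_nhdsWithin] with y hy
    by_contra hc
    push_neg at hc
    have : v n ≤ y := csInf_le (hSbdd n hn) hc.le
    exact absurd hy (not_lt.mpr this)
  have hge : ∀ a : ℝ, G a < 1 → ∀ᶠ n in atTop, a ≤ v n := by
    intro a haG
    filter_upwards [tendsto_one_div_atTop_nhds_zero_nat.eventually_lt_const
      (by linarith : (0:ℝ) < 1 - G a), eventually_ge_atTop 2] with n hn hn2
    obtain ⟨y, hy⟩ := hSne n (by omega)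
    refine le_csInf ⟨y, hy.le⟩ fun x hx => ?_
    by_contra hc
    push_neg at hc
    have h1 := hG.1 hc.le
    have hx' : 1 - 1/(n:ℝ) ≤ G x := hx
    linarith
  have ha' : ∀ᶠ n : ℕ in atTop, 1 - 1/(n:ℝ) ≤ G (v n) := by
    filter_upwards [eventually_ge_atTop 2] with n hn using hGv n hn
  have hb' : ∀ᶠ n in atTop, Function.leftLim G (v n) ≤ 1 - 1/(n:ℝ) := by
    filter_upwards [eventually_ge_atTop 2] with n hn using hleft n hn
  by_cases hB : BddAbove {x | G x < 1}
  · have hEF : endFilter G = 𝓝[<] (sSup {x | G x < 1}) := by rw [endFilter, if_pos hB]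
    have hreg1 : Tendsto G (𝓝[<] (sSup {x | G x < 1})) (𝓝 1) := by
      rw [← hEF]; exact hreg.1
    have hvlt : ∀ᶠ n in atTop, v n < sSup {x | G x < 1} := by
      filter_upwards [eventually_ge_atTop 2] with n hn
      obtain ⟨y, hy1, hy2⟩ :=
        ((hreg1.eventually_const_lt (h1n n (by omega))).and self_mem_nhdsWithin).exists
      calc v n ≤ y := csInf_le (hSbdd n hn) hy1.le
        _ < _ := hy2
    have hvG : ∀ᶠ n in atTop, G (v n) < 1 := by
      filter_upwards [hvlt] with n hn
      exact lt_one_of_lt_sSup hG hn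
    have htnd : Tendsto v atTop (𝓝 (sSup {x | G x < 1})) := by
      rw [tendsto_order]
      constructor
      · intro a haa
        obtain ⟨a', ha1, ha2⟩ := exists_between haa
        filter_upwards [hge a' (lt_one_of_lt_sSup hG ha2)] with n hn
        linarith
      · intro b hbb
        filter_upwards [hvlt] with n hn
        linarith
    have hv_end : Tendsto v atTop (endFilter G) := by
      rw [hEF]
      exact tendsto_nhdsWithin_of_tendsto_nhds_of_eventually_within v htnd hvlt
    exact final_step hG hreg hv_end hvG ha' hb'
  · have hEF : endFilter G = atTop := by rw [endFilter, if_neg hB]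
    have hvG : ∀ᶠ n in atTop, G (v n) < 1 :=
      Eventually.of_forall fun n => lt_one_of_unbdd hG hB _
    have hv_end : Tendsto v atTop (endFilter G) := by
      rw [hEF, tendsto_atTop]
      intro a
      filter_upwards [hge a (lt_one_of_unbdd hG hB a)] with n hn using hn
    exact final_step hG hreg hv_end hvG ha' hb'

end Helpers

theorem stmt0 (G : ℝ → ℝ) (hG : IsDistFun G) :
    (∃ γ : ℝ, γ ∈ Set.Ioo (0 : ℝ) 1 ∧ ∃ v : ℕ → ℝ,
      Tendsto (fun n : ℕ => G (v n) ^ n) atTop (𝓝 γ)) ↔ RegularDF G := by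
  constructor
  · rintro ⟨γ, hγ, u, hu⟩
    have hw01 : ∀ n, 0 ≤ G (u n) ∧ G (u n) ≤ 1 := fun n =>
      ⟨distFun_nonneg hG _, distFun_le_one hG _⟩
    obtain ⟨hlt1, hw1, hlin⟩ := lin_tendsto_of_pow hγ hw01 hu
    have hτ : 0 < -Real.log γ := by
      have := Real.log_neg hγ.1 hγ.2
      linarith
    have hend := tendsto_one_endFilter hG hlt1 hw1
    exact ⟨hend, ratio_tendsto hG hτ hlt1 hlin hend⟩
  · exact fun hreg => backward_exists hG hreg
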